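/- Let χ : ℤ≥1 → ℂ be a multiplicative function (χ(1) = 1 and χ(mn) = χ(m)χ(n) whenever gcd(m,n) = 1), let l be a positive integer, and let w ∈ ℂ be such that p^{1−2w} ≠ 1 for every prime p dividing l. Define τ_s(k) := Σ_{ab=k} (a/b)^s (sum over ordered factorizations k = ab into positive integers) and T_l(w) := Σ_{l₁ l₂ = l} χ(l₁) · μ(l₁) · l₁^{−1/2} · τ_{w−1/2}(l₂). Then l^{1/2−w} · T_l(w) = ∏_{p | l, p prime} [ (1 − p^{(1−2w)(1+ν_p(l))})/(1 − p^{1−2w}) − χ(p) · p^{−w} · (1 − p^{(1−2w)·ν_p(l)})/(1 − p^{1−2w}) ], where ν_p(l) is the exponent of p in the prime factorization of l. -/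

import Mathlib

open Finset ArithmeticFunction

/-- `τ_s(k) = Σ_{ab = k} (a/b)^s`, summed over ordered factorizations `k = a·b`. -/
noncomputable def tauC (s : ℂ) (k : ℕ) : ℂ :=
  ∑ a ∈ k.divisors, (((a : ℝ) / ((k / a : ℕ) : ℝ) : ℝ) : ℂ) ^ s

/-- `T_l(w) = Σ_{l₁l₂ = l} χ(l₁) μ(l₁) l₁^{-1/2} τ_{w-1/2}(l₂)`. -/
noncomputable def Tfun (χ : ℕ → ℂ) (l : ℕ) (w : ℂ) : ℂ :=
  ∑ d ∈ l.divisors, χ d * (moebius d : ℂ) * (d : ℂ) ^ (-(1 / 2 : ℂ)) *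
    tauC (w - 1 / 2) (l / d)

namespace Stmt6Aux

open scoped ArithmeticFunction.zeta

/-- The arithmetic function `n ↦ χ(n) μ(n) n^{-w}`. -/
noncomputable def Afun (χ : ℕ → ℂ) (w : ℂ) : ArithmeticFunction ℂ :=
  ⟨fun n => χ n * (moebius n : ℂ) * (n : ℂ) ^ (-w), by simp⟩

lemma Afun_apply (χ : ℕ → ℂ) (w : ℂ) (n : ℕ) :
    Afun χ w n = χ n * (moebius n : ℂ) * (n : ℂ) ^ (-w) := rfl

/-- The arithmetic function `n ↦ n^{1-2w}`. -/
noncomputable def Cfun (w : ℂ) : ArithmeticFunction ℂ :=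
  ⟨fun n => if n = 0 then 0 else (n : ℂ) ^ ((1 : ℂ) - 2 * w), rfl⟩

lemma Cfun_apply (w : ℂ) (n : ℕ) :
    Cfun w n = if n = 0 then 0 else (n : ℂ) ^ ((1 : ℂ) - 2 * w) := rfl

noncomputable def Gfun (χ : ℕ → ℂ) (w : ℂ) : ArithmeticFunction ℂ :=
  Afun χ w * ((ζ : ArithmeticFunction ℂ) * Cfun w)

lemma isMultA (χ : ℕ → ℂ) (hχ1 : χ 1 = 1)
    (hχ : ∀ m n : ℕ, Nat.Coprime m n → χ (m * n) = χ m * χ n) (w : ℂ) :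
    (Afun χ w).IsMultiplicative := by
  constructor
  · simp [Afun_apply, hχ1]
  · intro m n hmn
    simp only [Afun_apply]
    rw [hχ m n hmn, isMultiplicative_moebius.map_mul_of_coprime hmn, Nat.cast_mul,
      Complex.natCast_mul_natCast_cpow]
    push_cast
    ring

lemma isMultC (w : ℂ) : (Cfun w).IsMultiplicative := by
  constructor
  · simp [Cfun_apply]
  · intro m n hmn
    simp only [Cfun_apply]
    rcases eq_or_ne m 0 with rfl | hm
    · simp
    rcases eq_or_ne n 0 with rfl | hn
    · simp
    rw [if_neg (mul_ne_zero hm hn), if_neg hm, if_neg hn, Nat.cast_mul,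
      Complex.natCast_mul_natCast_cpow]

lemma isMultG (χ : ℕ → ℂ) (hχ1 : χ 1 = 1)
    (hχ : ∀ m n : ℕ, Nat.Coprime m n → χ (m * n) = χ m * χ n) (w : ℂ) :
    (Gfun χ w).IsMultiplicative :=
  (isMultA χ hχ1 hχ w).mul (isMultiplicative_zeta.natCast.mul (isMultC w))

/-- The key pointwise power identity. -/
lemma cpow_key (d a b : ℕ) (hd : 0 < d) (ha : 0 < a) (hb : 0 < b) (w : ℂ) :
    ((d * (a * b) : ℕ) : ℂ) ^ ((1 / 2 : ℂ) - w) * ((d : ℕ) : ℂ) ^ (-(1 / 2 : ℂ)) *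
      ((((a : ℕ) : ℝ) / ((b : ℕ) : ℝ) : ℝ) : ℂ) ^ (w - 1 / 2) =
    ((d : ℕ) : ℂ) ^ (-w) * ((b : ℕ) : ℂ) ^ ((1 : ℂ) - 2 * w) := by
  have hd' : (0 : ℝ) < d := by exact_mod_cast hd
  have ha' : (0 : ℝ) < a := by exact_mod_cast ha
  have hb' : (0 : ℝ) < b := by exact_mod_cast hb
  have hdC : ((d : ℕ) : ℂ) ≠ 0 := Nat.cast_ne_zero.mpr hd.ne'
  have hbC : ((b : ℕ) : ℂ) ≠ 0 := Nat.cast_ne_zero.mpr hb.ne'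
  have habC : ((d * (a * b) : ℕ) : ℂ) ≠ 0 :=
    Nat.cast_ne_zero.mpr (Nat.mul_pos hd (Nat.mul_pos ha hb)).ne'
  have hqC : ((((a : ℕ) : ℝ) / ((b : ℕ) : ℝ) : ℝ) : ℂ) ≠ 0 := by
    simp only [ne_eq, Complex.ofReal_eq_zero]
    positivity
  rw [Complex.cpow_def_of_ne_zero habC, Complex.cpow_def_of_ne_zero hdC,
    Complex.cpow_def_of_ne_zero hqC, Complex.cpow_def_of_ne_zero hdC,
    Complex.cpow_def_of_ne_zero hbC]
  have hlogd : Complex.log ((d : ℕ) : ℂ) = (Real.log d : ℂ) := by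
    rw [← Complex.ofReal_natCast, Complex.ofReal_log (le_of_lt hd')]
  have hlogb : Complex.log ((b : ℕ) : ℂ) = (Real.log b : ℂ) := by
    rw [← Complex.ofReal_natCast, Complex.ofReal_log (le_of_lt hb')]
  have hlogdab : Complex.log ((d * (a * b) : ℕ) : ℂ) =
      (Real.log d : ℂ) + (Real.log a : ℂ) + (Real.log b : ℂ) := by
    rw [show ((d * (a * b) : ℕ) : ℂ) = (((d : ℝ) * ((a : ℝ) * (b : ℝ)) : ℝ) : ℂ) by
        push_cast; ring,
      ← Complex.ofReal_log (by positivity),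
      Real.log_mul hd'.ne' (by positivity),
      Real.log_mul ha'.ne' hb'.ne']
    push_cast
    ring
  have hlogq : Complex.log ((((a : ℕ) : ℝ) / ((b : ℕ) : ℝ) : ℝ) : ℂ) =
      (Real.log a : ℂ) - (Real.log b : ℂ) := by
    rw [← Complex.ofReal_log (by positivity), Real.log_div ha'.ne' hb'.ne']
    push_cast
    ring
  rw [hlogd, hlogb, hlogdab, hlogq, ← Complex.exp_add, ← Complex.exp_add, ← Complex.exp_add]
  congr 1
  ring

/-- `l^{1/2-w} T_l(w)` equals the Dirichlet convolution `Gfun` at `l`. -/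
lemma key (χ : ℕ → ℂ) (w : ℂ) (l : ℕ) (hl : 0 < l) :
    (l : ℂ) ^ ((1 / 2 : ℂ) - w) * Tfun χ l w = Gfun χ w l := by
  rw [Gfun, mul_apply,
    Nat.sum_divisorsAntidiagonal (fun x y => Afun χ w x * ((ζ : ArithmeticFunction ℂ) * Cfun w) y),
    Tfun, mul_sum]
  refine sum_congr rfl fun d hd => ?_
  obtain ⟨hdl, -⟩ := Nat.mem_divisors.mp hd
  have hd0 : 0 < d := Nat.pos_of_mem_divisors hd
  have hld : 0 < l / d := Nat.div_pos (Nat.le_of_dvd hl hdl) hd0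
  rw [coe_zeta_mul_apply, ← Nat.sum_div_divisors (l / d) (fun i => Cfun w i), Afun_apply]
  simp only [tauC, Finset.mul_sum]
  refine sum_congr rfl fun a ha' => ?_
  have hal : a ∣ l / d := (Nat.mem_divisors.mp ha').1
  have ha0 : 0 < a := Nat.pos_of_mem_divisors ha'
  set b := l / d / a with hbdef
  have hb0 : 0 < b := Nat.div_pos (Nat.le_of_dvd hld hal) ha0
  have hab : a * b = l / d := Nat.mul_div_cancel' hal
  have hlab : l = d * (a * b) := by rw [hab, Nat.mul_div_cancel' hdl]
  have hkey := cpow_key d a b hd0 ha0 hb0 w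
  rw [Cfun_apply, if_neg hb0.ne']
  rw [show (l : ℂ) = ((d * (a * b) : ℕ) : ℂ) by rw [← hlab]]
  linear_combination (χ d * ((moebius d : ℤ) : ℂ)) * hkey

/-- Value of the zeta-Cfun convolution at a prime power. -/
lemma H_pp {p : ℕ} (hp : p.Prime) (w : ℂ) (m : ℕ) :
    ((ζ : ArithmeticFunction ℂ) * Cfun w) (p ^ m) =
      ∑ i ∈ range (m + 1), ((p : ℂ) ^ ((1 : ℂ) - 2 * w)) ^ i := by
  rw [coe_zeta_mul_apply, Nat.sum_divisors_prime_pow hp]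
  refine sum_congr rfl fun i _ => ?_
  rw [Cfun_apply, if_neg (pow_ne_zero _ hp.pos.ne'), Nat.cast_pow,
    ← Complex.natCast_cpow_natCast_mul, Complex.cpow_nat_mul]

/-- Value of `Gfun` at a prime power `p^e`, `e ≥ 1`. -/
lemma G_pp (χ : ℕ → ℂ) (hχ1 : χ 1 = 1) (w : ℂ) {p : ℕ} (hp : p.Prime) {e : ℕ} (he : 1 ≤ e)
    (hx : (p : ℂ) ^ ((1 : ℂ) - 2 * w) ≠ 1) :
    Gfun χ w (p ^ e) =
      (1 - (p : ℂ) ^ (((1 : ℂ) - 2 * w) * (1 + (e : ℂ)))) / (1 - (p : ℂ) ^ ((1 : ℂ) - 2 * w)) -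
        χ p * (p : ℂ) ^ (-w) *
          (1 - (p : ℂ) ^ (((1 : ℂ) - 2 * w) * (e : ℂ))) /
          (1 - (p : ℂ) ^ ((1 : ℂ) - 2 * w)) := by
  set x : ℂ := (p : ℂ) ^ ((1 : ℂ) - 2 * w) with hxdef
  have hsum : Gfun χ w (p ^ e) =
      ∑ i ∈ range (e + 1), Afun χ w (p ^ i) * ((ζ : ArithmeticFunction ℂ) * Cfun w) (p ^ (e - i)) := by
    rw [Gfun, mul_apply,
      Nat.sum_divisorsAntidiagonal
        (fun u v => Afun χ w u * ((ζ : ArithmeticFunction ℂ) * Cfun w) v),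
      Nat.sum_divisors_prime_pow hp]
    refine sum_congr rfl fun i hi => ?_
    have hie : i ≤ e := Nat.lt_succ_iff.mp (mem_range.mp hi)
    rw [Nat.pow_div hie hp.pos]
  have hzero : ∀ i ∈ range (e + 1), i ∉ ({0, 1} : Finset ℕ) →
      Afun χ w (p ^ i) * ((ζ : ArithmeticFunction ℂ) * Cfun w) (p ^ (e - i)) = 0 := by
    intro i _ hi
    simp only [mem_insert, mem_singleton] at hi
    push_neg at hi
    obtain ⟨hi0, hi1⟩ := hi
    have : moebius (p ^ i) = 0 := by
      rw [moebius_apply_prime_pow hp (by omega), if_neg (by omega)]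
    rw [Afun_apply, this]
    push_cast
    ring
  have hsub : ({0, 1} : Finset ℕ) ⊆ range (e + 1) := by
    intro i hi
    simp only [mem_insert, mem_singleton] at hi
    simp only [mem_range]
    omega
  rw [hsum, ← Finset.sum_subset hsub hzero, Finset.sum_pair (by omega : (0 : ℕ) ≠ 1)]
  rw [pow_zero, pow_one, Nat.sub_zero]
  rw [H_pp hp, H_pp hp]
  have hA1 : Afun χ w 1 = 1 := by simp [Afun_apply, hχ1]
  have hAp : Afun χ w p = -(χ p * (p : ℂ) ^ (-w)) := by
    rw [Afun_apply, moebius_apply_prime hp]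
    push_cast
    ring
  rw [hA1, hAp, geom_sum_eq hx, geom_sum_eq hx]
  have h1 : (p : ℂ) ^ (((1 : ℂ) - 2 * w) * (1 + (e : ℂ))) = x ^ (e + 1) := by
    rw [show ((1 : ℂ) - 2 * w) * (1 + (e : ℂ)) = ((e + 1 : ℕ) : ℂ) * ((1 : ℂ) - 2 * w) by
      push_cast; ring, Complex.cpow_nat_mul]
  have h2 : (p : ℂ) ^ (((1 : ℂ) - 2 * w) * (e : ℂ)) = x ^ e := by
    rw [show ((1 : ℂ) - 2 * w) * (e : ℂ) = ((e : ℕ) : ℂ) * ((1 : ℂ) - 2 * w) by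
      ring, Complex.cpow_nat_mul]
  rw [h1, h2, show e - 1 + 1 = e by omega]
  have hx1 : x - 1 ≠ 0 := sub_ne_zero.mpr hx
  have hx1' : (1 : ℂ) - x ≠ 0 := fun h => hx1 (by linear_combination -h)
  field_simp
  ring

end Stmt6Aux

open Stmt6Aux in
/-- Euler product expression for `l^{1/2-w} T_l(w)`. -/
theorem stmt_6 (χ : ℕ → ℂ) (hχ1 : χ 1 = 1)
    (hχ : ∀ m n : ℕ, Nat.Coprime m n → χ (m * n) = χ m * χ n)
    (l : ℕ) (hl : 0 < l) (w : ℂ)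
    (hw : ∀ p : ℕ, p.Prime → p ∣ l → (p : ℂ) ^ ((1 : ℂ) - 2 * w) ≠ 1) :
    (l : ℂ) ^ ((1 / 2 : ℂ) - w) * Tfun χ l w =
      ∏ p ∈ l.primeFactors,
        ((1 - (p : ℂ) ^ (((1 : ℂ) - 2 * w) * (1 + (l.factorization p : ℂ)))) /
            (1 - (p : ℂ) ^ ((1 : ℂ) - 2 * w)) -
          χ p * (p : ℂ) ^ (-w) *
            (1 - (p : ℂ) ^ (((1 : ℂ) - 2 * w) * (l.factorization p : ℂ))) /
            (1 - (p : ℂ) ^ ((1 : ℂ) - 2 * w))) := by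
  rw [key χ w l hl,
    (isMultG χ hχ1 hχ w).multiplicative_factorization _ hl.ne',
    Nat.prod_factorization_eq_prod_primeFactors]
  refine Finset.prod_congr rfl fun p hp => ?_
  have hpp : p.Prime := Nat.prime_of_mem_primeFactors hp
  have hpd : p ∣ l := Nat.dvd_of_mem_primeFactors hp
  exact G_pp χ hχ1 w hpp (hpp.factorization_pos_of_dvd hl.ne' hpd) (hw p hpp hpd)
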